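/- In sl_3[t], let w be a highest weight vector of an sl_2[t]-type current module with (y ⊗ 1)^{N+1} w = 0 where N = 2|λ|-2j-2, i.e. (y_θ ⊗ 1)^{2|λ|-2j-1} w_{λ,j} = 0 in the truncated Weyl module W_{|λ|-j}(λ). Then applying (x_θ ⊗ t)^{2|λ|-2j-3} to this relation yields (y_θ ⊗ t^{|λ|-j-2})(y_θ ⊗ t^{|λ|-j-1}) w_{λ,j} = 0. -/

import Mathlib

open scoped TensorProduct
open LieAlgebra.SpecialLinear Polynomial

/-- The special linear Lie algebra `sl_N(ℂ)`. -/
abbrev slC (N : ℕ) : Type := LieAlgebra.SpecialLinear.sl (Fin N) ℂ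

/-- The current algebra `sl_{n+1}[t] = sl_{n+1}(ℂ) ⊗ ℂ[t]`. -/
abbrev CA (n : ℕ) : Type := (Polynomial ℂ) ⊗[ℂ] slC (n+1)

noncomputable instance (n : ℕ) : LieAlgebra ℂ (CA n) where
  lie_smul c x y := by
    rw [← algebraMap_smul (Polynomial ℂ) c y, ← algebraMap_smul (Polynomial ℂ) c ⁅x, y⁆]
    exact @lie_smul (Polynomial ℂ) (CA n) (CA n) _ _ _ _ _ _ _
      ((algebraMap ℂ (Polynomial ℂ)) c) x y

/-- The element `g ⊗ t^r` of the current algebra. -/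
noncomputable def tp (n r : ℕ) (g : slC (n+1)) : CA n :=
  (Polynomial.X ^ r : Polynomial ℂ) ⊗ₜ[ℂ] g

/-- The coroot element `h_{α_i} = E_{i,i} - E_{i+1,i+1}` of `sl_{n+1}(ℂ)`. -/
noncomputable def Hc {n : ℕ} (i : Fin n) : slC (n+1) :=
  ⟨Matrix.single i.castSucc i.castSucc 1 - Matrix.single i.succ i.succ 1, by
    show _ ∈ LinearMap.ker (Matrix.traceLinearMap (Fin (n+1)) ℂ ℂ)
    rw [LinearMap.mem_ker]; simp⟩

/-- The root vector `E_{i,j}` (`i ≠ j`) of `sl_{n+1}(ℂ)`. -/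
noncomputable def EE {n : ℕ} (i j : Fin (n+1)) (h : j ≠ i) : slC (n+1) :=
  LieAlgebra.SpecialLinear.single i j h.symm (1 : ℂ)

/-- The defining relations of the local Weyl module `W_loc(μ)`, `μ = ∑ᵢ m i · ωᵢ`,
for a vector `w` of a module over the current algebra:
`(n⁺ ⊗ ℂ[t]) w = 0`, `(h_{α_i} ⊗ t^s) w = δ_{s,0} μ(h_{α_i}) w`, and
`(y_{α_i} ⊗ 1)^{μ(h_{α_i})+1} w = 0`. -/
structure WeylRel (n : ℕ) (m : Fin n → ℕ) {V : Type} [AddCommGroup V] [Module ℂ V]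
    [LieRingModule (CA n) V] (w : V) : Prop where
  posAnn : ∀ (i j : Fin (n+1)) (hij : i < j) (r : ℕ), ⁅tp n r (EE i j hij.ne'), w⁆ = 0
  cartan : ∀ (i : Fin n) (s : ℕ), ⁅tp n s (Hc i), w⁆ = (if s = 0 then (m i : ℂ) else 0) • w
  lowering : ∀ i : Fin n,
    (fun v => ⁅tp n 0 (EE i.succ i.castSucc (Fin.castSucc_lt_succ (i := i)).ne), v⁆)^[m i + 1] w = 0

/-- `V` together with the cyclic vector `w` *is the* local Weyl module `W_loc(∑ᵢ m i ωᵢ)` for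
`sl_{n+1}[t]`: `w` satisfies the defining relations, generates `V`, and `(V, w)` is universal
among modules with a vector satisfying these relations. -/
structure IsLocalWeyl (n : ℕ) (m : Fin n → ℕ) (V : Type) [AddCommGroup V] [Module ℂ V]
    [LieRingModule (CA n) V] [LieModule ℂ (CA n) V] (w : V) : Prop where
  rel : WeylRel n m w
  cyclic : ∀ N : LieSubmodule ℂ (CA n) V, w ∈ N → N = ⊤
  universal : ∀ (V' : Type) [AddCommGroup V'] [Module ℂ V'] [LieRingModule (CA n) V']
    [LieModule ℂ (CA n) V'] (w' : V'), WeylRel n m w' → ∃ f : V →ₗ⁅ℂ, CA n⁆ V', f w = w'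
/-- The lowering root vector `y_θ = E_{3,1}` for the highest root `θ` of `sl_3(ℂ)`. -/
noncomputable def Yθ : slC 3 := EE (n := 2) (Fin.last 2) 0 (by decide)

/-- The defining relations of the truncated Weyl module `W_N(λ)` for `sl_3[t]`,
`λ = l 0 · ω₁ + l 1 · ω₂`: the local Weyl relations plus `(y_θ ⊗ t^N) w = 0`. -/
structure TruncRel (N : ℕ) (l : Fin 2 → ℕ) {V : Type} [AddCommGroup V] [Module ℂ V]
    [LieRingModule (CA 2) V] (w : V) : Prop where
  weyl : WeylRel 2 l w
  trunc : ⁅tp 2 N Yθ, w⁆ = 0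

/-- `(V, w)` *is the* truncated Weyl module `W_N(λ)` for `sl_3[t]`. -/
structure IsTruncWeyl (N : ℕ) (l : Fin 2 → ℕ) (V : Type) [AddCommGroup V] [Module ℂ V]
    [LieRingModule (CA 2) V] [LieModule ℂ (CA 2) V] (w : V) : Prop where
  rel : TruncRel N l w
  cyclic : ∀ S : LieSubmodule ℂ (CA 2) V, w ∈ S → S = ⊤
  universal : ∀ (V' : Type) [AddCommGroup V'] [Module ℂ V'] [LieRingModule (CA 2) V']
    [LieModule ℂ (CA 2) V'] (w' : V'), TruncRel N l w' → ∃ f : V →ₗ⁅ℂ, CA 2⁆ V', f w = w'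

/-- A `ℤ₊`-grading of a module over the current algebra: the pieces are independent,
exhaust the module, and `(g ⊗ t^r)` maps the `k`-th piece to the `(k+r)`-th piece. -/
def IsGrading (n : ℕ) (V : Type) [AddCommGroup V] [Module ℂ V] [LieRingModule (CA n) V]
    (gr : ℕ → Submodule ℂ V) : Prop :=
  iSupIndep gr ∧ (⨆ k, gr k) = ⊤ ∧
    ∀ (r k : ℕ) (g : slC (n+1)), ∀ v ∈ gr k, ⁅tp n r g, v⁆ ∈ gr (k + r)

/-- The weight space of weight `μ` (for the standard Cartan subalgebra). -/
noncomputable def wtSp (n : ℕ) (V : Type) [AddCommGroup V] [Module ℂ V]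
    [LieRingModule (CA n) V] [LieModule ℂ (CA n) V] (μ : Fin n → ℤ) : Submodule ℂ V :=
  ⨅ i : Fin n, Module.End.eigenspace (LieModule.toEnd ℂ (CA n) V (tp n 0 (Hc i))) ((μ i : ℂ))

/-- The coefficient of `q^r e(μ)` in the graded character of a graded module:
the dimension of the weight-`μ` subspace of the `r`-th graded piece. -/
noncomputable def chc {n : ℕ} {V : Type} [AddCommGroup V] [Module ℂ V]
    [LieRingModule (CA n) V] [LieModule ℂ (CA n) V]
    (gr : ℕ → Submodule ℂ V) (μ : Fin n → ℤ) (r : ℕ) : ℕ :=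
  Module.finrank ℂ ↥(gr r ⊓ wtSp n V μ)

/-- Multiplication of a `q`-series by a polynomial in `q`, at the level of coefficients. -/
def convC (c : Polynomial ℤ) (f : ℕ → ℤ) (r : ℕ) : ℤ :=
  ∑ a ∈ Finset.range (r + 1), c.coeff a * f (r - a)


/-! ### Auxiliary material for `stmt16` -/

set_option maxHeartbeats 1000000
set_option synthInstance.maxHeartbeats 400000

section Stmt16Aux

/-- The raising root vector `x_θ = E_{1,3}` for the highest root of `sl_3(ℂ)`. -/
noncomputable def Xth : slC 3 := EE 0 (Fin.last 2) (by decide)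

/-- The coroot `h_θ = h_1 + h_2`. -/
noncomputable def Hth : slC 3 := Hc 0 + Hc 1

lemma tp_lie (a b : ℕ) (g g' : slC 3) : ⁅tp 2 a g, tp 2 b g'⁆ = tp 2 (a+b) ⁅g, g'⁆ := by
  show ⁅(X ^ a : ℂ[X]) ⊗ₜ[ℂ] g, (X ^ b : ℂ[X]) ⊗ₜ[ℂ] g'⁆ = (X ^ (a+b) : ℂ[X]) ⊗ₜ[ℂ] ⁅g, g'⁆
  rw [LieAlgebra.ExtendScalars.bracket_tmul, pow_add]

lemma lie_Xth_Yth : ⁅Xth, Yθ⁆ = Hth := by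
  apply Subtype.ext
  rw [LieAlgebra.SpecialLinear.sl_bracket]
  show (Matrix.single (0 : Fin 3) (Fin.last 2) 1) * (Matrix.single (Fin.last 2) (0 : Fin 3) 1)
      - (Matrix.single (Fin.last 2) (0 : Fin 3) 1) * (Matrix.single (0 : Fin 3) (Fin.last 2) 1)
    = (Matrix.single (0:Fin 3) (0:Fin 3) 1 - Matrix.single (1:Fin 3) (1:Fin 3) 1)
      + (Matrix.single (1:Fin 3) (1:Fin 3) 1 - Matrix.single (2:Fin 3) (2:Fin 3) 1)
  have h2 : Fin.last 2 = (2 : Fin 3) := by decide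
  rw [h2]
  ext i k
  fin_cases i <;> fin_cases k <;>
    simp [Matrix.mul_apply, Matrix.single, Fin.sum_univ_three]

lemma lie_Hth_Yth : ⁅Hth, Yθ⁆ = -(Yθ + Yθ) := by
  apply Subtype.ext
  rw [LieAlgebra.SpecialLinear.sl_bracket]
  show ((Matrix.single (0:Fin 3) (0:Fin 3) 1 - Matrix.single (1:Fin 3) (1:Fin 3) 1)
      + (Matrix.single (1:Fin 3) (1:Fin 3) 1 - Matrix.single (2:Fin 3) (2:Fin 3) 1))
      * (Matrix.single (Fin.last 2) (0 : Fin 3) 1)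
      - (Matrix.single (Fin.last 2) (0 : Fin 3) 1) *
      ((Matrix.single (0:Fin 3) (0:Fin 3) 1 - Matrix.single (1:Fin 3) (1:Fin 3) 1)
      + (Matrix.single (1:Fin 3) (1:Fin 3) 1 - Matrix.single (2:Fin 3) (2:Fin 3) 1))
    = -(Matrix.single (Fin.last 2) (0 : Fin 3) 1
        + Matrix.single (Fin.last 2) (0 : Fin 3) 1)
  have h2 : Fin.last 2 = (2 : Fin 3) := by decide
  rw [h2]
  ext i k
  fin_cases i <;> fin_cases k <;>
    simp [Matrix.mul_apply, Matrix.single, Fin.sum_univ_three] <;> ring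

lemma lie_Yth_Yth (a b : ℕ) : ⁅tp 2 a Yθ, tp 2 b Yθ⁆ = 0 := by
  rw [tp_lie]
  have : ⁅Yθ, Yθ⁆ = 0 := lie_self _
  rw [this]
  show (X ^ (a+b) : ℂ[X]) ⊗ₜ[ℂ] (0 : slC 3) = 0
  rw [TensorProduct.tmul_zero]

variable {V : Type} [AddCommGroup V] [Module ℂ V] [LieRingModule (CA 2) V]
  [LieModule ℂ (CA 2) V]

lemma commXY (a b : ℕ) (v : V) :
    ⁅tp 2 a Xth, ⁅tp 2 b Yθ, v⁆⁆ = ⁅tp 2 (a+b) Hth, v⁆ + ⁅tp 2 b Yθ, ⁅tp 2 a Xth, v⁆⁆ := by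
  rw [leibniz_lie, tp_lie, lie_Xth_Yth]

lemma commHY (a b : ℕ) (v : V) :
    ⁅tp 2 a Hth, ⁅tp 2 b Yθ, v⁆⁆
      = (-2 : ℂ) • ⁅tp 2 (a+b) Yθ, v⁆ + ⁅tp 2 b Yθ, ⁅tp 2 a Hth, v⁆⁆ := by
  rw [leibniz_lie, tp_lie, lie_Hth_Yth]
  congr 1
  have h1 : tp 2 (a+b) (-(Yθ + Yθ)) = -(tp 2 (a+b) Yθ + tp 2 (a+b) Yθ) := by
    show (X ^ (a+b) : ℂ[X]) ⊗ₜ[ℂ] (-(Yθ + Yθ)) = _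
    rw [TensorProduct.tmul_neg, TensorProduct.tmul_add]
    rfl
  rw [h1, neg_lie, add_lie]
  rw [neg_smul, two_smul]

lemma commYY (a b : ℕ) (v : V) :
    ⁅tp 2 a Yθ, ⁅tp 2 b Yθ, v⁆⁆ = ⁅tp 2 b Yθ, ⁅tp 2 a Yθ, v⁆⁆ := by
  rw [leibniz_lie, lie_Yth_Yth, zero_lie, zero_add]

lemma lie_finset_sum {ι : Type} (s : Finset ι) (x : CA 2) (f : ι → V) :
    ⁅x, ∑ i ∈ s, f i⁆ = ∑ i ∈ s, ⁅x, f i⁆ := by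
  classical
  induction s using Finset.cons_induction with
  | empty => simp
  | cons a s ha ih => rw [Finset.sum_cons, lie_add, ih, Finset.sum_cons]

/-- `esum w k m` is the sum over all compositions `p₁ + ⋯ + p_k = m` of
`(y_θ ⊗ t^{p₁}) ⋯ (y_θ ⊗ t^{p_k}) w`. -/
noncomputable def esum (w : V) : ℕ → ℕ → V
  | 0, m => if m = 0 then w else 0
  | (k+1), m => ∑ p ∈ Finset.range (m+1), ⁅tp 2 p Yθ, esum w k (m-p)⁆

lemma esum_zero (w : V) (m : ℕ) : esum w 0 m = if m = 0 then w else 0 := rfl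

lemma esum_succ (w : V) (k m : ℕ) :
    esum w (k+1) m = ∑ p ∈ Finset.range (m+1), ⁅tp 2 p Yθ, esum w k (m-p)⁆ := rfl

lemma tri_sum {A : Type} [AddCommMonoid A] (m : ℕ) (f : ℕ → ℕ → A) :
    ∑ p ∈ Finset.range (m+1), ∑ q ∈ Finset.range (m-p+1), f p q
      = ∑ t ∈ Finset.range (m+1), ∑ p ∈ Finset.range (t+1), f p (t-p) := by
  rw [Finset.sum_sigma', Finset.sum_sigma']
  refine Finset.sum_nbij' (fun x => ⟨x.1 + x.2, x.1⟩) (fun x => ⟨x.2, x.1 - x.2⟩)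
    ?_ ?_ ?_ ?_ ?_
  · rintro ⟨p, q⟩ hx
    simp only [Finset.mem_sigma, Finset.mem_range] at hx ⊢
    omega
  · rintro ⟨t, p⟩ hx
    simp only [Finset.mem_sigma, Finset.mem_range] at hx ⊢
    omega
  · rintro ⟨p, q⟩ hx
    simp only [Finset.mem_sigma, Finset.mem_range] at hx
    dsimp only
    have h1 : p + q - p = q := by omega
    rw [h1]
  · rintro ⟨t, p⟩ hx
    simp only [Finset.mem_sigma, Finset.mem_range] at hx
    dsimp only
    have h1 : p + (t - p) = t := by omega
    rw [h1]
  · rintro ⟨p, q⟩ hx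
    simp only [Finset.mem_sigma, Finset.mem_range] at hx
    dsimp only
    have h1 : p + q - p = q := by omega
    rw [h1]

lemma tri_swap {A : Type} [AddCommMonoid A] (m : ℕ) (f : ℕ → ℕ → A) :
    ∑ p ∈ Finset.range (m+1), ∑ q ∈ Finset.range (m-p+1), f p q
      = ∑ p ∈ Finset.range (m+1), ∑ q ∈ Finset.range (m-p+1), f q p := by
  rw [tri_sum m f, tri_sum m (fun p q => f q p)]
  refine Finset.sum_congr rfl fun t ht => ?_
  simp only [Finset.mem_range] at ht
  rw [← Finset.sum_range_reflect (fun p => f p (t-p)) (t+1)]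
  refine Finset.sum_congr rfl fun p hp => ?_
  simp only [Finset.mem_range] at hp
  have h1 : t + 1 - 1 - p = t - p := by omega
  have h2 : t - (t - p) = p := by omega
  rw [h1, h2]

lemma lemA (w : V) (hH : ∀ a : ℕ, 1 ≤ a → ⁅tp 2 a Hth, w⁆ = 0) :
    ∀ k m : ℕ, ∑ p ∈ Finset.range (m+1), ⁅tp 2 (p+1) Hth, esum w k (m-p)⁆
      = (-2 * ((m:ℂ)+1)) • esum w k (m+1) := by
  intro k
  induction k with
  | zero =>
    intro m
    rw [esum_zero, if_neg (by omega), smul_zero]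
    refine Finset.sum_eq_zero fun p hp => ?_
    rw [esum_zero]
    by_cases hmp : m - p = 0
    · rw [if_pos hmp]; exact hH (p+1) (by omega)
    · rw [if_neg hmp, lie_zero]
  | succ k ih =>
    intro m
    have step1 : ∑ p ∈ Finset.range (m+1), ⁅tp 2 (p+1) Hth, esum w (k+1) (m-p)⁆
        = (∑ p ∈ Finset.range (m+1), ∑ q ∈ Finset.range (m-p+1),
            (-2:ℂ) • ⁅tp 2 ((p+1)+q) Yθ, esum w k (m-p-q)⁆)
          + ∑ p ∈ Finset.range (m+1), ∑ q ∈ Finset.range (m-p+1),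
            ⁅tp 2 q Yθ, ⁅tp 2 (p+1) Hth, esum w k (m-p-q)⁆⁆ := by
      rw [← Finset.sum_add_distrib]
      refine Finset.sum_congr rfl fun p hp => ?_
      rw [esum_succ, lie_finset_sum, ← Finset.sum_add_distrib]
      exact Finset.sum_congr rfl fun q hq => commHY (p+1) q _
    have hS1 : (∑ p ∈ Finset.range (m+1), ∑ q ∈ Finset.range (m-p+1),
            (-2:ℂ) • ⁅tp 2 ((p+1)+q) Yθ, esum w k (m-p-q)⁆)
        = ∑ t ∈ Finset.range (m+1),
            (-2 * ((t:ℂ)+1)) • ⁅tp 2 (t+1) Yθ, esum w k (m-t)⁆ := by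
      rw [tri_sum m (fun p q => (-2:ℂ) • ⁅tp 2 ((p+1)+q) Yθ, esum w k (m-p-q)⁆)]
      refine Finset.sum_congr rfl fun t ht => ?_
      simp only [Finset.mem_range] at ht
      have hc : ∀ p ∈ Finset.range (t+1),
          (-2:ℂ) • ⁅tp 2 ((p+1)+(t-p)) Yθ, esum w k (m-p-(t-p))⁆
            = (-2:ℂ) • ⁅tp 2 (t+1) Yθ, esum w k (m-t)⁆ := by
        intro p hp
        simp only [Finset.mem_range] at hp
        have h1 : (p+1)+(t-p) = t+1 := by omega
        have h2 : m-p-(t-p) = m-t := by omega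
        rw [h1, h2]
      rw [Finset.sum_congr rfl hc, Finset.sum_const, Finset.card_range,
        ← Nat.cast_smul_eq_nsmul ℂ, smul_smul]
      congr 1
      push_cast
      ring
    have hS2 : (∑ p ∈ Finset.range (m+1), ∑ q ∈ Finset.range (m-p+1),
            ⁅tp 2 q Yθ, ⁅tp 2 (p+1) Hth, esum w k (m-p-q)⁆⁆)
        = ∑ p ∈ Finset.range (m+1),
            (-2 * (((m:ℂ)-p)+1)) • ⁅tp 2 p Yθ, esum w k (m-p+1)⁆ := by
      rw [tri_swap m (fun p q => ⁅tp 2 q Yθ, ⁅tp 2 (p+1) Hth, esum w k (m-p-q)⁆⁆)]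
      refine Finset.sum_congr rfl fun p hp => ?_
      simp only [Finset.mem_range] at hp
      have hc : ∀ q ∈ Finset.range (m-p+1),
          ⁅tp 2 p Yθ, ⁅tp 2 (q+1) Hth, esum w k (m-q-p)⁆⁆
            = ⁅tp 2 p Yθ, ⁅tp 2 (q+1) Hth, esum w k ((m-p)-q)⁆⁆ := by
        intro q hq
        have h1 : m - q - p = (m-p) - q := by omega
        rw [h1]
      rw [Finset.sum_congr rfl hc, ← lie_finset_sum, ih (m-p), lie_smul]
      congr 1
      rw [Nat.cast_sub (by omega : p ≤ m)]
    rw [step1, hS1, hS2, esum_succ, Finset.smul_sum]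
    have hsplit : ∀ s ∈ Finset.range (m+2),
        (-2 * ((m:ℂ)+1)) • ⁅tp 2 s Yθ, esum w k (m+1-s)⁆
          = (-2 * (s:ℂ)) • ⁅tp 2 s Yθ, esum w k (m+1-s)⁆
            + (-2 * (((m:ℂ)+1)-(s:ℂ))) • ⁅tp 2 s Yθ, esum w k (m+1-s)⁆ := by
      intro s hs
      rw [← add_smul]
      congr 1
      ring
    rw [Finset.sum_congr rfl hsplit, Finset.sum_add_distrib]
    congr 1
    · rw [Finset.sum_range_succ'
        (fun s => (-2 * (s:ℂ)) • ⁅tp 2 s Yθ, esum w k (m+1-s)⁆) (m+1)]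
      simp only [Nat.cast_zero, mul_zero, zero_smul, add_zero]
      refine Finset.sum_congr rfl fun t ht => ?_
      simp only [Finset.mem_range] at ht
      have h1 : m + 1 - (t+1) = m - t := by omega
      rw [h1]
      congr 1
      push_cast
      ring
    · rw [Finset.sum_range_succ
        (fun s => (-2 * (((m:ℂ)+1)-(s:ℂ))) • ⁅tp 2 s Yθ, esum w k (m+1-s)⁆) (m+1)]
      have hlast : (-2 * (((m:ℂ)+1)-((m+1:ℕ):ℂ)))
          • ⁅tp 2 (m+1) Yθ, esum w k (m+1-(m+1))⁆ = 0 := by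
        push_cast
        rw [sub_self, mul_zero, zero_smul]
      rw [hlast, add_zero]
      refine Finset.sum_congr rfl fun p hp => ?_
      simp only [Finset.mem_range] at hp
      have h1 : m + 1 - p = m - p + 1 := by omega
      rw [h1]
      congr 1
      ring

lemma lemC (w : V) : ∀ k m : ℕ,
    ((k:ℂ)+1) • ∑ p ∈ Finset.range (m+1), (p:ℂ) • ⁅tp 2 p Yθ, esum w k (m-p)⁆
      = (m:ℂ) • esum w (k+1) m := by
  intro k
  induction k with
  | zero =>
    intro m
    have key : ∀ c : ℕ → ℂ,
        ∑ p ∈ Finset.range (m+1), c p • ⁅tp 2 p Yθ, esum w 0 (m-p)⁆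
          = c m • ⁅tp 2 m Yθ, w⁆ := by
      intro c
      rw [Finset.sum_eq_single_of_mem m (Finset.self_mem_range_succ m)]
      · rw [Nat.sub_self, esum_zero, if_pos rfl]
      · intro p hp hpm
        simp only [Finset.mem_range] at hp
        rw [esum_zero, if_neg (by omega), lie_zero, smul_zero]
    have key2 : esum w 1 m = ⁅tp 2 m Yθ, w⁆ := by
      rw [esum_succ]
      have := key (fun _ => 1)
      simpa using this
    rw [key (fun p => (p:ℂ)), key2]
    rw [Nat.cast_zero, zero_add, one_smul]
  | succ k ih =>
    intro m
    have rhs1 : (m:ℂ) • esum w (k+2) m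
        = (∑ p ∈ Finset.range (m+1), (p:ℂ) • ⁅tp 2 p Yθ, esum w (k+1) (m-p)⁆)
          + ∑ p ∈ Finset.range (m+1),
              ⁅tp 2 p Yθ, (((m-p:ℕ)):ℂ) • esum w (k+1) (m-p)⁆ := by
      rw [esum_succ, Finset.smul_sum, ← Finset.sum_add_distrib]
      refine Finset.sum_congr rfl fun p hp => ?_
      simp only [Finset.mem_range] at hp
      rw [lie_smul, ← add_smul, Nat.cast_sub (by omega : p ≤ m)]
      congr 1
      ring
    have rhs2 : ∀ p, ((((m-p:ℕ)):ℂ)) • esum w (k+1) (m-p)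
        = ((k:ℂ)+1) • ∑ q ∈ Finset.range ((m-p)+1),
            (q:ℂ) • ⁅tp 2 q Yθ, esum w k ((m-p)-q)⁆ := by
      intro p
      rw [ih (m-p)]
    have rhs3 : ∑ p ∈ Finset.range (m+1),
          ⁅tp 2 p Yθ, (((m-p:ℕ)):ℂ) • esum w (k+1) (m-p)⁆
        = ((k:ℂ)+1) • ∑ p ∈ Finset.range (m+1), ∑ q ∈ Finset.range (m-p+1),
            (q:ℂ) • ⁅tp 2 p Yθ, ⁅tp 2 q Yθ, esum w k (m-p-q)⁆⁆ := by
      rw [Finset.smul_sum]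
      refine Finset.sum_congr rfl fun p hp => ?_
      rw [rhs2 p, lie_smul, lie_finset_sum]
      congr 1
      refine Finset.sum_congr rfl fun q hq => ?_
      rw [lie_smul]
    have rhs4 : ∑ p ∈ Finset.range (m+1), ∑ q ∈ Finset.range (m-p+1),
          (q:ℂ) • ⁅tp 2 p Yθ, ⁅tp 2 q Yθ, esum w k (m-p-q)⁆⁆
        = ∑ p ∈ Finset.range (m+1), (p:ℂ) • ⁅tp 2 p Yθ, esum w (k+1) (m-p)⁆ := by
      rw [tri_swap m (fun p q => (q:ℂ) • ⁅tp 2 p Yθ, ⁅tp 2 q Yθ, esum w k (m-p-q)⁆⁆)]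
      refine Finset.sum_congr rfl fun p hp => ?_
      simp only [Finset.mem_range] at hp
      have hc : ∀ q ∈ Finset.range (m-p+1),
          (p:ℂ) • ⁅tp 2 q Yθ, ⁅tp 2 p Yθ, esum w k (m-q-p)⁆⁆
            = (p:ℂ) • ⁅tp 2 p Yθ, ⁅tp 2 q Yθ, esum w k ((m-p)-q)⁆⁆ := by
        intro q hq
        have h1 : m - q - p = (m-p) - q := by omega
        rw [h1, commYY]
      rw [Finset.sum_congr rfl hc, ← Finset.smul_sum, ← lie_finset_sum, ← esum_succ]
    have goal2 : (m:ℂ) • esum w (k+2) m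
        = (1 + ((k:ℂ)+1)) • ∑ p ∈ Finset.range (m+1),
            (p:ℂ) • ⁅tp 2 p Yθ, esum w (k+1) (m-p)⁆ := by
      rw [add_smul, one_smul, rhs1, rhs3, rhs4]
    rw [goal2]
    congr 1
    push_cast
    ring

lemma lemB (w : V) (hH : ∀ a : ℕ, 1 ≤ a → ⁅tp 2 a Hth, w⁆ = 0)
    (hX : ∀ a : ℕ, ⁅tp 2 a Xth, w⁆ = 0) :
    ∀ k m : ℕ, ⁅tp 2 1 Xth, esum w k m⁆
      = (-(k:ℂ) * ((m:ℂ)+1)) • esum w (k-1) (m+1) := by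
  intro k
  induction k with
  | zero =>
    intro m
    rw [esum_zero]
    simp only [Nat.cast_zero, neg_zero, zero_mul, zero_smul]
    by_cases hm : m = 0
    · rw [if_pos hm]; exact hX 1
    · rw [if_neg hm, lie_zero]
  | succ k ih =>
    intro m
    rw [esum_succ, lie_finset_sum]
    have e1 : ∀ p ∈ Finset.range (m+1),
        ⁅tp 2 1 Xth, ⁅tp 2 p Yθ, esum w k (m-p)⁆⁆
          = ⁅tp 2 (p+1) Hth, esum w k (m-p)⁆
            + (-(k:ℂ) * (((m:ℂ)-(p:ℂ))+1)) • ⁅tp 2 p Yθ, esum w (k-1) (m-p+1)⁆ := by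
      intro p hp
      simp only [Finset.mem_range] at hp
      have h1 : (1:ℕ) + p = p + 1 := by omega
      rw [commXY 1 p, h1, ih (m-p), lie_smul, Nat.cast_sub (by omega : p ≤ m)]
    rw [Finset.sum_congr rfl e1, Finset.sum_add_distrib, lemA w hH k m]
    cases k with
    | zero =>
      have hz : esum w 0 (m+1) = 0 := by rw [esum_zero, if_neg (by omega)]
      simp only [Nat.cast_zero, neg_zero, zero_mul, zero_smul, smul_zero,
        Finset.sum_const_zero, add_zero, hz]
    | succ k' =>
      have hS : ∑ p ∈ Finset.range (m+1),
            (-((k'+1:ℕ):ℂ) * (((m:ℂ)-(p:ℂ))+1)) • ⁅tp 2 p Yθ, esum w (k'+1-1) (m-p+1)⁆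
          = ∑ p ∈ Finset.range (m+2),
            (-((k':ℂ)+1) * (((m:ℂ)+1)-(p:ℂ))) • ⁅tp 2 p Yθ, esum w k' (m+1-p)⁆ := by
        rw [Finset.sum_range_succ
          (fun p => (-((k':ℂ)+1) * (((m:ℂ)+1)-(p:ℂ))) • ⁅tp 2 p Yθ, esum w k' (m+1-p)⁆) (m+1)]
        have hlast : (-((k':ℂ)+1) * (((m:ℂ)+1)-((m+1:ℕ):ℂ)))
            • ⁅tp 2 (m+1) Yθ, esum w k' (m+1-(m+1))⁆ = 0 := by
          push_cast
          rw [sub_self, mul_zero, zero_smul]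
        rw [hlast, add_zero]
        refine Finset.sum_congr rfl fun p hp => ?_
        simp only [Finset.mem_range] at hp
        have h1 : m - p + 1 = m + 1 - p := by omega
        rw [h1]
        congr 1
        push_cast
        ring
      rw [hS]
      have hsplit : ∀ p ∈ Finset.range (m+2),
          (-((k':ℂ)+1) * (((m:ℂ)+1)-(p:ℂ))) • ⁅tp 2 p Yθ, esum w k' (m+1-p)⁆
            = (-((k':ℂ)+1) * ((m:ℂ)+1)) • ⁅tp 2 p Yθ, esum w k' (m+1-p)⁆
              + ((k':ℂ)+1) • ((p:ℂ) • ⁅tp 2 p Yθ, esum w k' (m+1-p)⁆) := by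
        intro p hp
        rw [smul_smul, ← add_smul]
        congr 1
        ring
      rw [Finset.sum_congr rfl hsplit, Finset.sum_add_distrib, ← Finset.smul_sum,
        ← Finset.smul_sum, lemC w k' (m+1), ← esum_succ]
      have hfold : ∀ x : V, (-2 * ((m:ℂ)+1)) • x
            + ((-((k':ℂ)+1) * ((m:ℂ)+1)) • x + (((m+1:ℕ):ℂ)) • x)
          = (-((k'+1+1:ℕ):ℂ) * ((m:ℂ)+1)) • x := by
        intro x
        rw [← add_smul, ← add_smul]
        congr 1
        push_cast
        ring
      rw [hfold]
      rfl

end Stmt16Aux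

/-- In the truncated Weyl module `W_{|λ|-j}(λ)` for `sl_3[t]`, with `0 ≤ j < min(l₁,l₂)`,
the relation `(y_θ ⊗ 1)^{2|λ|-2j-1} w = 0` (which holds there) yields
`(y_θ ⊗ t^{|λ|-j-2})(y_θ ⊗ t^{|λ|-j-1}) w = 0`. -/
theorem stmt16 (l1 l2 j : ℕ) (hj : j < min l1 l2)
    (V : Type) [AddCommGroup V] [Module ℂ V] [LieRingModule (CA 2) V]
    [LieModule ℂ (CA 2) V] (w : V)
    (h : IsTruncWeyl (l1 + l2 - j) ![l1, l2] V w)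
    (hnil : (fun v => ⁅tp 2 0 Yθ, v⁆)^[2 * (l1 + l2) - 2 * j - 1] w = 0) :
    ⁅tp 2 (l1 + l2 - j - 2) Yθ, ⁅tp 2 (l1 + l2 - j - 1) Yθ, w⁆⁆ = 0 := by
  have hw := h.rel.weyl
  have htr := h.rel.trunc
  have hl1 : j < l1 := lt_of_lt_of_le hj (min_le_left _ _)
  have hl2 : j < l2 := lt_of_lt_of_le hj (min_le_right _ _)
  set N := l1 + l2 - j with hN
  have hN2 : 2 ≤ N := by omega
  have hXw : ∀ a : ℕ, ⁅tp 2 a Xth, w⁆ = 0 := fun a =>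
    hw.posAnn 0 (Fin.last 2) (by decide) a
  have hHw : ∀ a : ℕ, 1 ≤ a → ⁅tp 2 a Hth, w⁆ = 0 := by
    intro a ha
    have h0 := hw.cartan 0 a
    have h1 := hw.cartan 1 a
    rw [if_neg (by omega)] at h0 h1
    have hsum : tp 2 a Hth = tp 2 a (Hc 0) + tp 2 a (Hc 1) := by
      show (X ^ a : ℂ[X]) ⊗ₜ[ℂ] (Hc 0 + Hc 1) = _
      rw [TensorProduct.tmul_add]
      rfl
    rw [hsum, add_lie, h0, h1, zero_smul, add_zero]
  have hYw : ∀ p : ℕ, N ≤ p → ⁅tp 2 p Yθ, w⁆ = 0 := by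
    intro p hp
    induction p, hp using Nat.le_induction with
    | base => exact htr
    | succ p hp ih =>
      have hc := commHY 1 p w
      rw [ih, lie_zero, hHw 1 le_rfl, lie_zero, add_zero] at hc
      have := (smul_eq_zero.mp hc.symm).resolve_left (by norm_num)
      have h1p : (1:ℕ) + p = p + 1 := by omega
      rwa [h1p] at this
  have hE0 : ∀ k : ℕ, esum w k 0 = (fun v => ⁅tp 2 0 Yθ, v⁆)^[k] w := by
    intro k
    induction k with
    | zero => rw [esum_zero, if_pos rfl, Function.iterate_zero_apply]
    | succ k ih =>
      rw [esum_succ, Finset.sum_range_succ, Finset.sum_range_zero, zero_add, ih,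
        Function.iterate_succ_apply']
  set M := 2 * (l1 + l2) - 2 * j - 1 with hMdef
  have hM3 : 3 ≤ M := by omega
  have hM0 : esum w M 0 = 0 := by rw [hE0]; exact hnil
  have hchain : ∀ i : ℕ, i ≤ M - 2 → esum w (M - i) i = 0 := by
    intro i
    induction i with
    | zero => intro _; simpa using hM0
    | succ i ih =>
      intro hi
      have hb := lemB w hHw hXw (M - i) i
      rw [ih (by omega), lie_zero] at hb
      have hcoeff : (-((M - i:ℕ):ℂ) * ((i:ℂ)+1)) ≠ 0 := by
        apply mul_ne_zero
        · simp only [ne_eq, neg_eq_zero, Nat.cast_eq_zero]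
          omega
        · intro hc
          norm_cast at hc
      have hz := (smul_eq_zero.mp hb.symm).resolve_left hcoeff
      have hidx : M - i - 1 = M - (i+1) := by omega
      rwa [hidx] at hz
  have hfin : esum w 2 (M - 2) = 0 := by
    have hc := hchain (M - 2) le_rfl
    have h2 : M - (M - 2) = 2 := by omega
    rwa [h2] at hc
  have hE1 : ∀ q : ℕ, esum w 1 q = ⁅tp 2 q Yθ, w⁆ := by
    intro q
    rw [esum_succ, Finset.sum_eq_single_of_mem q (Finset.self_mem_range_succ q)]
    · rw [Nat.sub_self, esum_zero, if_pos rfl]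
    · intro p hp hpq
      simp only [Finset.mem_range] at hp
      rw [esum_zero, if_neg (by omega), lie_zero]
  set t := M - 2 with ht
  have hsum : ∑ p ∈ Finset.range (t+1), ⁅tp 2 p Yθ, ⁅tp 2 (t - p) Yθ, w⁆⁆ = 0 := by
    calc ∑ p ∈ Finset.range (t+1), ⁅tp 2 p Yθ, ⁅tp 2 (t - p) Yθ, w⁆⁆
        = esum w 2 t := by
          rw [esum_succ]
          exact Finset.sum_congr rfl fun p _ => by rw [hE1]
      _ = 0 := hfin
  have hsubset : ({N-2, N-1} : Finset ℕ) ⊆ Finset.range (t+1) := by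
    intro x hx
    simp only [Finset.mem_insert, Finset.mem_singleton] at hx
    simp only [Finset.mem_range]
    omega
  have hzero : ∀ p ∈ Finset.range (t+1), p ∉ ({N-2, N-1} : Finset ℕ) →
      ⁅tp 2 p Yθ, ⁅tp 2 (t - p) Yθ, w⁆⁆ = 0 := by
    intro p hp hpn
    simp only [Finset.mem_range] at hp
    simp only [Finset.mem_insert, Finset.mem_singleton] at hpn
    push_neg at hpn
    by_cases hcase : N ≤ t - p
    · rw [hYw _ hcase, lie_zero]
    · have hpN : N ≤ p := by omega
      rw [commYY, hYw _ hpN, lie_zero]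
  have hpair := Finset.sum_subset hsubset hzero
  rw [hsum, Finset.sum_pair (by omega : N-2 ≠ N-1)] at hpair
  have e1 : t - (N-2) = N-1 := by omega
  have e2 : t - (N-1) = N-2 := by omega
  rw [e1, e2, commYY (N-1) (N-2)] at hpair
  have h2 : (2:ℂ) • ⁅tp 2 (N-2) Yθ, ⁅tp 2 (N-1) Yθ, w⁆⁆ = 0 := by
    rw [two_smul]
    exact hpair
  exact (smul_eq_zero.mp h2).resolve_left (by norm_num)
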